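/- Suppose γ is an anti-Salkowski-type curve: τ(s) = c for a nonzero constant c and κ is not constant on I. Then there exist constants λ and μ ≠ 0 with λκ(s) + μτ(s) = −1 for all s (so γ is a B-Bertrand curve), but there exist NO constants λ ≠ 0 and μ such that λκ(s) + μτ(s) = 1 for all s (so γ is not a Bertrand curve). -/

import Mathlib

open scoped RealInnerProductSpace

noncomputable def cross3 (x y : EuclideanSpace ℝ (Fin 3)) : EuclideanSpace ℝ (Fin 3) :=
  WithLp.toLp 2 ![x 1 * y 2 - x 2 * y 1, x 2 * y 0 - x 0 * y 2, x 0 * y 1 - x 1 * y 0]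

/-- An anti-Salkowski-type curve (τ = c ≠ 0 constant, κ nonconstant) is a
B-Bertrand curve (∃ λ, μ ≠ 0 with λκ + μτ = -1) but not a Bertrand curve
(no λ ≠ 0, μ with λκ + μτ = 1). -/
theorem stmt_5 (a b : ℝ) (γ T N B : ℝ → EuclideanSpace ℝ (Fin 3)) (κ τ : ℝ → ℝ)
    (hγT : ∀ s ∈ Set.Ioo a b, HasDerivAt γ (T s) s)
    (hT1 : ∀ s ∈ Set.Ioo a b, ‖T s‖ = 1)
    (hN1 : ∀ s ∈ Set.Ioo a b, ‖N s‖ = 1)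
    (hB1 : ∀ s ∈ Set.Ioo a b, ‖B s‖ = 1)
    (hTN : ∀ s ∈ Set.Ioo a b, ⟪T s, N s⟫ = 0)
    (hTB : ∀ s ∈ Set.Ioo a b, ⟪T s, B s⟫ = 0)
    (hNB : ∀ s ∈ Set.Ioo a b, ⟪N s, B s⟫ = 0)
    (horient : ∀ s ∈ Set.Ioo a b, B s = cross3 (T s) (N s))
    (hκpos : ∀ s ∈ Set.Ioo a b, 0 < κ s)
    (hTder : ∀ s ∈ Set.Ioo a b, HasDerivAt T (κ s • N s) s)
    (hNder : ∀ s ∈ Set.Ioo a b, HasDerivAt N ((-κ s) • T s + τ s • B s) s)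
    (hBder : ∀ s ∈ Set.Ioo a b, HasDerivAt B ((-τ s) • N s) s)
    (c : ℝ) (hc : c ≠ 0)
    (hτconst : ∀ s ∈ Set.Ioo a b, τ s = c)
    (hκnonconst : ¬ ∃ d : ℝ, ∀ s ∈ Set.Ioo a b, κ s = d) :
    (∃ lam μ : ℝ, μ ≠ 0 ∧ ∀ s ∈ Set.Ioo a b, lam * κ s + μ * τ s = -1) ∧
    ¬ ∃ lam μ : ℝ, lam ≠ 0 ∧ ∀ s ∈ Set.Ioo a b, lam * κ s + μ * τ s = 1 := by
  constructor
  · refine ⟨0, -1/c, by simp [hc], fun s hs => ?_⟩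
    rw [hτconst s hs]
    field_simp
    ring
  · rintro ⟨lam, μ, hlam, h⟩
    apply hκnonconst
    refine ⟨(1 - μ * c) / lam, fun s hs => ?_⟩
    have := h s hs
    rw [hτconst s hs] at this
    field_simp
    linarith
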